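/- If S is a tree and v is a leaf of S adjacent (in an ambient graph G containing S as spanning tree) to some internal vertex w of S other than its S-neighbor, then the tree S' obtained by deleting the edge of S at v and adding the edge vw is a spanning tree of G with exactly the same number of leaves as S, in which the former S-neighbor of v has its degree decreased by one. -/

import Mathlib

/-- rotating a leaf. If `v` is a leaf of the spanning tree `S`
with unique `S`-neighbor `p`, and `w ≠ p` is an internal vertex of `S` with
`vw ∈ E(G)`, then `S' = (S - pv) + vw` is a spanning tree of `G`, the degree
of `p` drops by one, and `S'` has at least as many leaves as `S`. -/
theorem stmt_17 {V : Type*} [Fintype V] (G S : SimpleGraph V)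
    (hSG : S ≤ G) (hS : S.IsTree)
    (v p w : V) (hvp : S.Adj v p) (hvleaf : S.neighborSet v = {p})
    (hwp : w ≠ p) (hwint : 2 ≤ (S.neighborSet w).ncard) (hvw : G.Adj v w) :
    SimpleGraph.fromEdgeSet ((S.edgeSet \ {s(p, v)}) ∪ {s(v, w)}) ≤ G ∧
    (SimpleGraph.fromEdgeSet ((S.edgeSet \ {s(p, v)}) ∪ {s(v, w)})).IsTree ∧
    ((SimpleGraph.fromEdgeSet ((S.edgeSet \ {s(p, v)}) ∪ {s(v, w)})).neighborSet p).ncard + 1 =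
      (S.neighborSet p).ncard ∧
    {x : V | (S.neighborSet x).ncard = 1}.ncard ≤
      {x : V | ((SimpleGraph.fromEdgeSet
        ((S.edgeSet \ {s(p, v)}) ∪ {s(v, w)})).neighborSet x).ncard = 1}.ncard := by
  classical
  set S' := SimpleGraph.fromEdgeSet ((S.edgeSet \ {s(p, v)}) ∪ {s(v, w)}) with hS'def
  have hvnep : v ≠ p := hvp.ne
  have hvnew : v ≠ w := hvw.ne
  -- v's S-adjacency is exactly p
  have hvadj : ∀ x, S.Adj v x ↔ x = p := by
    intro x
    constructor
    · intro h
      have : x ∈ S.neighborSet v := h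
      rw [hvleaf] at this
      exact this
    · rintro rfl; exact hvp
  have hvwS : ¬ S.Adj v w := fun h => hwp ((hvadj w).mp h)
  -- characterize adjacency in S'
  have hS'adj : ∀ a b, S'.Adj a b ↔
      ((S.Adj a b ∧ s(a, b) ≠ s(p, v)) ∨ s(a, b) = s(v, w)) := by
    intro a b
    rw [hS'def, SimpleGraph.fromEdgeSet_adj]
    constructor
    · rintro ⟨h, hne⟩
      rcases h with ⟨he, hne'⟩ | he
      · exact Or.inl ⟨S.mem_edgeSet.mp he, hne'⟩
      · exact Or.inr he
    · rintro (⟨ha, hne⟩ | he)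
      · exact ⟨Or.inl ⟨S.mem_edgeSet.mpr ha, hne⟩, ha.ne⟩
      · refine ⟨Or.inr he, ?_⟩
        rw [Sym2.eq_iff] at he
        rcases he with ⟨rfl, rfl⟩ | ⟨rfl, rfl⟩
        · exact hvnew
        · exact fun h => hvnew h.symm
  -- S' ≤ G
  have hle : S' ≤ G := by
    intro a b hab
    rw [hS'adj] at hab
    rcases hab with ⟨ha, _⟩ | he
    · exact hSG ha
    · rw [Sym2.eq_iff] at he
      rcases he with ⟨rfl, rfl⟩ | ⟨rfl, rfl⟩
      · exact hvw
      · exact hvw.symm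
  -- v's S'-neighborhood is exactly {w}
  have hS'v : ∀ x, S'.Adj v x ↔ x = w := by
    intro x
    rw [hS'adj]
    constructor
    · rintro (⟨ha, hne⟩ | he)
      · exact absurd ((hvadj x).mp ha) (by
          rintro rfl
          exact hne (Sym2.eq_swap))
      · rw [Sym2.eq_iff] at he
        rcases he with ⟨h1, rfl⟩ | ⟨rfl, h2⟩
        · rfl
        · exact absurd rfl hvnew
    · rintro rfl
      exact Or.inr rfl
  -- the direct new edge
  have hvwS' : S'.Adj v w := (hS'v w).mpr rfl
  -- a path from p to w in S avoids v
  have hpw : S'.Reachable p w := by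
    obtain ⟨q0⟩ := hS.isConnected.preconnected p w
    have hq : q0.bypass.IsPath := q0.bypass_isPath
    set q := q0.bypass with hqdef
    have hvq : v ∉ q.support := by
      intro hv
      have hspec := q.take_spec hv
      have hnodup : q.support.Nodup := hq.support_nodup
      rw [← hspec, SimpleGraph.Walk.support_append] at hnodup
      obtain ⟨_, _, hdisj⟩ := List.nodup_append'.mp hnodup
      -- p is in the support of takeUntil (as its start)
      have hp1 : p ∈ (q.takeUntil v hv).support := SimpleGraph.Walk.start_mem_support _
      -- p is in the tail of the support of dropUntil
      have hp2 : p ∈ (q.dropUntil v hv).support.tail := by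
        cases hdrop : q.dropUntil v hv with
        | nil => exact absurd rfl hvnew
        | cons h t =>
          have hb := (hvadj _).mp h
          simp only [SimpleGraph.Walk.support_cons, List.tail_cons]
          rw [← hb]
          exact t.start_mem_support
      exact hdisj hp1 hp2
    have hedges : ∀ e ∈ q.edges, e ∈ S'.edgeSet := by
      intro e he
      have heS : e ∈ S.edgeSet := q.edges_subset_edgeSet he
      have hene : e ≠ s(p, v) := by
        rintro rfl
        exact hvq (q.snd_mem_support_of_mem_edges he)
      rw [hS'def, SimpleGraph.edgeSet_fromEdgeSet]
      refine ⟨Or.inl ⟨heS, hene⟩, ?_⟩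
      intro hd
      exact (SimpleGraph.not_isDiag_of_mem_edgeSet S heS) hd
    exact ⟨q.transfer S' hedges⟩
  -- every S-edge gives S'-reachability
  have hreach : ∀ a b, S.Adj a b → S'.Reachable a b := by
    intro a b hab
    by_cases he : s(a, b) = s(p, v)
    · have hpv : S'.Reachable p v := hpw.trans ⟨SimpleGraph.Walk.cons hvwS'.symm SimpleGraph.Walk.nil⟩
      rw [Sym2.eq_iff] at he
      rcases he with ⟨rfl, rfl⟩ | ⟨rfl, rfl⟩
      · exact hpv
      · exact hpv.symm
    · exact ⟨SimpleGraph.Walk.cons ((hS'adj a b).mpr (Or.inl ⟨hab, he⟩)) SimpleGraph.Walk.nil⟩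
  -- connectivity of S'
  have hwalkreach : ∀ {a b : V}, S.Walk a b → S'.Reachable a b := by
    intro a b wk
    induction wk with
    | nil => exact SimpleGraph.Reachable.refl _
    | cons h q ih => exact (hreach _ _ h).trans ih
  have hconn : S'.Connected := by
    rw [SimpleGraph.connected_iff]
    refine ⟨fun a b => ?_, hS.isConnected.nonempty⟩
    obtain ⟨wk⟩ := hS.isConnected.preconnected a b
    exact hwalkreach wk
  -- acyclicity of S'
  have hacyc : S'.IsAcyclic := by
    intro a c hc
    by_cases hvwmem : s(v, w) ∈ c.edges
    · -- rotate the cycle to start at v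
      have hvsup : v ∈ c.support := c.fst_mem_support_of_mem_edges hvwmem
      have hd : (c.rotate v hvsup).IsCycle := hc.rotate hvsup
      have hdedges : s(v, w) ∈ (c.rotate v hvsup).edges :=
        ((c.rotate_edges v hvsup).mem_iff).mpr hvwmem
      set d := c.rotate v hvsup with hddef
      cases hdd : d with
      | nil => rw [hdd] at hd; exact hd.ne_nil rfl
      | cons h q =>
        rename_i b
        have hb : b = w := (hS'v _).mp h
        have hnodup : d.edges.Nodup := hd.isTrail.edges_nodup
        rw [hdd] at hnodup
        simp only [SimpleGraph.Walk.edges_cons, List.nodup_cons] at hnodup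
        have hnot : s(v, w) ∉ q.edges := by rw [← hb]; exact hnodup.1
        have hqrev : s(v, w) ∈ q.edges := by
          cases hqr : q.reverse with
          | nil => exact absurd (hb ▸ rfl : (v : V) = w) hvnew
          | cons h' q' =>
            rename_i b'
            have hb' : b' = w := (hS'v _).mp h'
            have hmem : s(v, b') ∈ q.reverse.edges := by rw [hqr]; simp
            rw [hb'] at hmem
            rwa [SimpleGraph.Walk.edges_reverse, List.mem_reverse] at hmem
        exact hnot hqrev
    · -- all edges of c are in S, transfer
      have hedges : ∀ e ∈ c.edges, e ∈ S.edgeSet := by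
        intro e he
        have : e ∈ S'.edgeSet := c.edges_subset_edgeSet he
        rw [hS'def, SimpleGraph.edgeSet_fromEdgeSet] at this
        rcases this.1 with ⟨heS, _⟩ | heq
        · exact heS
        · exact absurd (heq ▸ he) hvwmem
      exact hS.IsAcyclic _ (hc.transfer hedges)
  have htree : S'.IsTree := ⟨hconn, hacyc⟩
  -- neighborhood of p in S'
  have hnp : S'.neighborSet p = S.neighborSet p \ {v} := by
    ext x
    simp only [SimpleGraph.mem_neighborSet, Set.mem_diff, Set.mem_singleton_iff]
    rw [hS'adj]
    constructor
    · rintro (⟨ha, hne⟩ | he)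
      · refine ⟨ha, ?_⟩
        rintro rfl
        exact hne rfl
      · rw [Sym2.eq_iff] at he
        rcases he with ⟨rfl, rfl⟩ | ⟨rfl, rfl⟩
        · exact absurd rfl hvnep
        · exact absurd rfl hwp
    · rintro ⟨ha, hne⟩
      refine Or.inl ⟨ha, ?_⟩
      intro h
      rw [Sym2.eq_iff] at h
      rcases h with ⟨-, rfl⟩ | ⟨h1, rfl⟩
      · exact hne rfl
      · exact hvnep h1.symm
  have hvmem : v ∈ S.neighborSet p := hvp.symm
  have hdeg : (S'.neighborSet p).ncard + 1 = (S.neighborSet p).ncard := by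
    rw [hnp]
    exact Set.ncard_diff_singleton_add_one hvmem (Set.toFinite _)
  -- p is not a leaf of S
  have hpnotleaf : (S.neighborSet p).ncard ≠ 1 := by
    intro hcard
    obtain ⟨a, ha⟩ := Set.ncard_eq_one.mp hcard
    have hav : a = v := by
      have := hvmem
      rw [ha] at this
      exact this.symm
    have ha' : S.neighborSet p = {v} := by rw [ha, hav]
    have hempty : S'.neighborSet p = ∅ := by
      rw [hnp, ha']
      simp
    obtain ⟨wk⟩ := hconn.preconnected p v
    cases wk with
    | nil => exact absurd rfl hvnep
    | cons h q =>
      have hmm : _ ∈ S'.neighborSet p := h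
      rw [hempty] at hmm
      exact hmm
  -- leaves of S are leaves of S'
  have hsubset : {x : V | (S.neighborSet x).ncard = 1} ⊆
      {x : V | (S'.neighborSet x).ncard = 1} := by
    intro x hx
    simp only [Set.mem_setOf_eq] at hx ⊢
    by_cases hxv : x = v
    · have : S'.neighborSet x = {w} := by
        ext y
        simp only [SimpleGraph.mem_neighborSet, Set.mem_singleton_iff]
        rw [hxv]
        exact hS'v y
      rw [this, Set.ncard_singleton]
    · have hxp : x ≠ p := fun h => hpnotleaf (h ▸ hx)
      have hxw : x ≠ w := fun h => by rw [h] at hx; omega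
      have : S'.neighborSet x = S.neighborSet x := by
        ext y
        simp only [SimpleGraph.mem_neighborSet]
        rw [hS'adj]
        constructor
        · rintro (⟨ha, _⟩ | he)
          · exact ha
          · rw [Sym2.eq_iff] at he
            rcases he with ⟨rfl, rfl⟩ | ⟨rfl, rfl⟩
            · exact absurd rfl hxv
            · exact absurd rfl hxw
        · intro ha
          refine Or.inl ⟨ha, ?_⟩
          intro h
          rw [Sym2.eq_iff] at h
          rcases h with ⟨rfl, rfl⟩ | ⟨rfl, h2⟩
          · exact hxp rfl
          · exact hxv rfl
      rw [this]
      exact hx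
  exact ⟨hle, htree, hdeg, Set.ncard_le_ncard hsubset (Set.toFinite _)⟩
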